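/- Let F_1,…,F_m ∈ ℂ[z_1,…,z_n] have no common zero in ℂ^n. Then there exist a constant c > 0 and an integer M such that Σ_{j=1}^m |F_j(z)|^2 / (1+|z|^2)^{d_j} ≥ c (1+|z|^2)^{−M} for all z ∈ ℂ^n, where d_j = deg F_j. -/

import Mathlib

open MvPolynomial

/-- Polynomial growth bound: `‖P(z)‖ ≤ (∑ ‖coeffs‖) * (1+‖z‖²)^{deg P}`. -/
lemma poly_growth_bound {n : ℕ} (P : MvPolynomial (Fin n) ℂ) (z : Fin n → ℂ) :
    ‖eval z P‖ ≤ (∑ d ∈ P.support, ‖coeff d P‖) *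
      (1 + ∑ k, ‖z k‖ ^ 2) ^ P.totalDegree := by
  set T : ℝ := 1 + ∑ k, ‖z k‖ ^ 2 with hT
  have hS : (0:ℝ) ≤ ∑ k, ‖z k‖ ^ 2 :=
    Finset.sum_nonneg fun k _ => sq_nonneg _
  have hT1 : (1:ℝ) ≤ T := by rw [hT]; linarith
  have hzT : ∀ i : Fin n, ‖z i‖ ≤ T := by
    intro i
    have h1 : ‖z i‖ ^ 2 ≤ ∑ k, ‖z k‖ ^ 2 :=
      Finset.single_le_sum (fun k _ => sq_nonneg ‖z k‖) (Finset.mem_univ i)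
    nlinarith [norm_nonneg (z i)]
  rw [eval_eq']
  calc ‖∑ d ∈ P.support, coeff d P * ∏ i, z i ^ d i‖
      ≤ ∑ d ∈ P.support, ‖coeff d P * ∏ i, z i ^ d i‖ := norm_sum_le _ _
    _ ≤ ∑ d ∈ P.support, ‖coeff d P‖ * T ^ P.totalDegree := by
        refine Finset.sum_le_sum fun d hd => ?_
        rw [norm_mul]
        refine mul_le_mul_of_nonneg_left ?_ (norm_nonneg _)
        have h1 : ‖∏ i, z i ^ d i‖ = ∏ i, ‖z i‖ ^ d i := by
          rw [norm_prod]; simp [norm_pow]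
        rw [h1]
        calc ∏ i, ‖z i‖ ^ d i ≤ ∏ i, T ^ d i := by
              refine Finset.prod_le_prod (fun i _ => pow_nonneg (norm_nonneg _) _)
                (fun i _ => pow_le_pow_left₀ (norm_nonneg _) (hzT i) _)
          _ = T ^ (∑ i, d i) := by rw [← Finset.prod_pow_eq_pow_sum]
          _ ≤ T ^ P.totalDegree := by
              refine pow_le_pow_right₀ hT1 ?_
              have := MvPolynomial.le_totalDegree hd
              simpa [Finsupp.sum_fintype] using this
    _ = (∑ d ∈ P.support, ‖coeff d P‖) * T ^ P.totalDegree := by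
        rw [Finset.sum_mul]

/-- Global Łojasiewicz inequality: if `F_1,…,F_m` have no common zero in `ℂ^n`, then
there are `c > 0` and an integer `M` with
`Σ_j |F_j(z)|²/(1+|z|²)^{d_j} ≥ c (1+|z|²)^{−M}` for all `z`, where `d_j = deg F_j`. -/
theorem global_lojasiewicz (n m : ℕ) (F : Fin m → MvPolynomial (Fin n) ℂ)
    (hnozero : ∀ z : Fin n → ℂ, ∃ j, eval z (F j) ≠ 0) :
    ∃ c : ℝ, 0 < c ∧ ∃ M : ℕ, ∀ z : Fin n → ℂ,
      ∑ j, ‖eval z (F j)‖ ^ 2 / (1 + ∑ k, ‖z k‖ ^ 2) ^ ((F j).totalDegree) ≥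
        c * (1 + ∑ k, ‖z k‖ ^ 2) ^ (-(M : ℝ)) := by
  -- Nullstellensatz: obtain `G` with `∑ G j * F j = 1`.
  obtain ⟨G, hG⟩ : ∃ G : Fin m → MvPolynomial (Fin n) ℂ, ∑ j, G j * F j = 1 := by
    set I : Ideal (MvPolynomial (Fin n) ℂ) := Ideal.span (Set.range F) with hI
    have hZL : MvPolynomial.zeroLocus ℂ I = ∅ := by
      ext z
      simp only [Set.mem_empty_iff_false, iff_false]
      intro hz
      obtain ⟨j, hj⟩ := hnozero z
      exact hj (by simpa [MvPolynomial.coe_aeval_eq_eval] using ((MvPolynomial.mem_zeroLocus_iff.mp hz) (F j)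
        (Ideal.subset_span ⟨j, rfl⟩)))
    have h1 : (1 : MvPolynomial (Fin n) ℂ) ∈ I := by
      have := MvPolynomial.vanishingIdeal_zeroLocus_eq_radical (K := ℂ) I
      rw [hZL, MvPolynomial.vanishingIdeal_empty] at this
      have h1r : (1 : MvPolynomial (Fin n) ℂ) ∈ I.radical := by
        rw [← this]; trivial
      obtain ⟨k, hk⟩ := h1r
      simpa using hk
    rw [hI, Ideal.span, Submodule.mem_span_range_iff_exists_fun] at h1
    obtain ⟨c, hc⟩ := h1
    exact ⟨c, by simpa [smul_eq_mul] using hc⟩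
  -- Constants
  set C : Fin m → ℝ := fun j => ∑ d ∈ (G j).support, ‖coeff d (G j)‖ with hC
  set A : ℝ := 1 + ∑ j, (C j) ^ 2 with hA
  have hCnn : ∀ j, 0 ≤ C j := fun j => Finset.sum_nonneg fun d _ => norm_nonneg _
  have hA0 : 0 < A := by
    have : (0:ℝ) ≤ ∑ j, (C j)^2 := Finset.sum_nonneg fun j _ => sq_nonneg _
    simp [hA]; linarith
  set N : ℕ := Finset.univ.sup (fun j : Fin m => (G j).totalDegree * 2 + (F j).totalDegree)
    with hN
  refine ⟨1 / A, by positivity, N, fun z => ?_⟩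
  set S : ℝ := ∑ k, ‖z k‖ ^ 2 with hS
  have hSnn : (0:ℝ) ≤ S := Finset.sum_nonneg fun k _ => sq_nonneg _
  set T : ℝ := 1 + S with hT
  have hT1 : (1:ℝ) ≤ T := by rw [hT]; linarith
  have hT0 : (0:ℝ) < T := lt_of_lt_of_le one_pos hT1
  -- Cauchy–Schwarz with weights √T^{d_j}
  set r : ℝ := Real.sqrt T with hr
  have hr0 : 0 < r := Real.sqrt_pos.mpr hT0
  have hr2 : r ^ 2 = T := Real.sq_sqrt hT0.le
  set f : Fin m → ℝ := fun j => ‖eval z (G j)‖ * r ^ (F j).totalDegree with hf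
  set g : Fin m → ℝ := fun j => ‖eval z (F j)‖ / r ^ (F j).totalDegree with hg
  have hfg : ∀ j, f j * g j = ‖eval z (G j)‖ * ‖eval z (F j)‖ := by
    intro j
    have : r ^ (F j).totalDegree ≠ 0 := pow_ne_zero _ hr0.ne'
    show ‖eval z (G j)‖ * r ^ (F j).totalDegree * (‖eval z (F j)‖ / r ^ (F j).totalDegree) = _
    field_simp [hf, hg]
  have h1le : (1:ℝ) ≤ ∑ j, f j * g j := by
    have : (1:ℝ) = ‖eval z (1 : MvPolynomial (Fin n) ℂ)‖ := by simp
    rw [this, ← hG]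
    calc ‖eval z (∑ j, G j * F j)‖ = ‖∑ j, eval z (G j) * eval z (F j)‖ := by
          simp [map_sum]
      _ ≤ ∑ j, ‖eval z (G j) * eval z (F j)‖ := norm_sum_le _ _
      _ = ∑ j, f j * g j := by
          refine Finset.sum_congr rfl fun j _ => ?_
          rw [hfg j, norm_mul]
  have hCS : (∑ j, f j * g j) ^ 2 ≤ (∑ j, f j ^ 2) * ∑ j, g j ^ 2 :=
    Finset.sum_mul_sq_le_sq_mul_sq _ _ _
  have hone : (1:ℝ) ≤ (∑ j, f j ^ 2) * ∑ j, g j ^ 2 := by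
    have h2 : (1:ℝ) ≤ (∑ j, f j * g j) ^ 2 := by nlinarith
    linarith
  -- Bound ∑ f²
  have hfbound : ∑ j, f j ^ 2 ≤ A * T ^ N := by
    have step : ∀ j : Fin m, f j ^ 2 ≤ (C j) ^ 2 * T ^ N := by
      intro j
      have hb := poly_growth_bound (G j) z
      have hb' : ‖eval z (G j)‖ ≤ C j * T ^ (G j).totalDegree := by
        simpa [hC, hT, hS] using hb
      have hGnn : (0:ℝ) ≤ ‖eval z (G j)‖ := norm_nonneg _
      have hrpow : (r ^ (F j).totalDegree) ^ 2 = T ^ (F j).totalDegree := by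
        rw [← pow_mul, mul_comm, pow_mul, hr2]
      have h1 : f j ^ 2 = ‖eval z (G j)‖ ^ 2 * T ^ (F j).totalDegree := by
        rw [hf]; rw [mul_pow, hrpow]
      rw [h1]
      have h2 : ‖eval z (G j)‖ ^ 2 ≤ (C j)^2 * (T ^ (G j).totalDegree)^2 := by
        have := mul_self_le_mul_self hGnn hb'
        calc ‖eval z (G j)‖ ^ 2 = ‖eval z (G j)‖ * ‖eval z (G j)‖ := sq ‖eval z (G j)‖
          _ ≤ (C j * T ^ (G j).totalDegree) * (C j * T ^ (G j).totalDegree) := this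
          _ = (C j)^2 * (T ^ (G j).totalDegree)^2 := by ring
      calc ‖eval z (G j)‖ ^ 2 * T ^ (F j).totalDegree
          ≤ ((C j)^2 * (T ^ (G j).totalDegree)^2) * T ^ (F j).totalDegree := by
            exact mul_le_mul_of_nonneg_right h2 (pow_nonneg hT0.le _)
        _ = (C j)^2 * T ^ ((G j).totalDegree * 2 + (F j).totalDegree) := by
            rw [← pow_mul, mul_assoc, ← pow_add]
        _ ≤ (C j)^2 * T ^ N := by
            refine mul_le_mul_of_nonneg_left ?_ (sq_nonneg _)
            refine pow_le_pow_right₀ hT1 ?_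
            rw [hN]
            exact Finset.le_sup (f := fun j : Fin m =>
              (G j).totalDegree * 2 + (F j).totalDegree) (Finset.mem_univ j)
    calc ∑ j, f j ^ 2 ≤ ∑ j, (C j)^2 * T ^ N := Finset.sum_le_sum fun j _ => step j
      _ = (∑ j, (C j)^2) * T ^ N := by rw [Finset.sum_mul]
      _ ≤ A * T ^ N := by
          refine mul_le_mul_of_nonneg_right ?_ (pow_nonneg hT0.le _)
          rw [hA]; linarith
  -- Conclude
  have hgsum_nn : (0:ℝ) ≤ ∑ j, g j ^ 2 := Finset.sum_nonneg fun j _ => sq_nonneg _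
  have key : (1:ℝ) ≤ (A * T ^ N) * ∑ j, g j ^ 2 := by
    calc (1:ℝ) ≤ (∑ j, f j ^ 2) * ∑ j, g j ^ 2 := hone
      _ ≤ (A * T ^ N) * ∑ j, g j ^ 2 :=
          mul_le_mul_of_nonneg_right hfbound hgsum_nn
  have hgsq : ∀ j, g j ^ 2 = ‖eval z (F j)‖ ^ 2 / T ^ (F j).totalDegree := by
    intro j
    rw [hg, div_pow, ← pow_mul, mul_comm ((F j).totalDegree) 2, pow_mul, hr2]
  have hATN : (0:ℝ) < A * T ^ N := mul_pos hA0 (pow_pos hT0 N)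
  have final : (1 / A) * T ^ (-(N:ℝ)) ≤ ∑ j, g j ^ 2 := by
    have hTr : T ^ (-(N:ℝ)) = (T ^ N)⁻¹ := by
      rw [Real.rpow_neg hT0.le, Real.rpow_natCast]
    have h := (div_le_iff₀ hATN).mpr (by rw [mul_comm]; exact key :
      (1:ℝ) ≤ (∑ j, g j ^ 2) * (A * T ^ N))
    calc (1 / A) * T ^ (-(N:ℝ)) = 1 / (A * T ^ N) := by
          rw [hTr]; field_simp
      _ ≤ ∑ j, g j ^ 2 := h
  calc ∑ j, ‖eval z (F j)‖ ^ 2 / T ^ (F j).totalDegree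
      = ∑ j, g j ^ 2 := by
        refine Finset.sum_congr rfl fun j _ => (hgsq j).symm
    _ ≥ (1 / A) * T ^ (-(N:ℝ)) := final
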